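/- Let K be an infinite compact Hausdorff space. Then C(K) has the convex diametral local diameter two property: the closed unit ball of C(K) equals the closed convex hull of the set of Δ-points of S_{C(K)}. In particular, every f ∈ S_{C(K)} can be approximated in sup norm by convex combinations of two functions f⁺, f⁻ ∈ B_{C(K)} each attaining the value ±1 at a limit point of K. -/

import Mathlib

open Set Filter ContinuousMap

section Helpers
variable {K : Type*} [TopologicalSpace K] [CompactSpace K] [T2Space K]


variable {K : Type*} [TopologicalSpace K] [CompactSpace K] [T2Space K]

lemma my_bump (y : K) {U : Set K} (hU : IsOpen U) (hy : y ∈ U) :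
    ∃ η : C(K, ℝ), η y = 1 ∧ (∀ x, η x ∈ Set.Icc (0:ℝ) 1) ∧ ∀ x ∉ U, η x = 0 := by
  obtain ⟨η, h0, h1, hη⟩ := exists_continuous_zero_one_of_isClosed
    hU.isClosed_compl isClosed_singleton
    (Set.disjoint_singleton_right.mpr (by simpa using hy))
  exact ⟨η, h1 rfl, hη, fun x hx => h0 hx⟩

lemma V_infinite {x₀ : K} (hx₀ : (nhdsWithin x₀ {x₀}ᶜ).NeBot) {V : Set K}
    (hV : IsOpen V) (hxV : x₀ ∈ V) : V.Infinite := by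
  intro hfin
  have hcl : IsClosed (V \ {x₀}) := (hfin.subset diff_subset).isClosed
  have hW : V ∩ (V \ {x₀})ᶜ ∈ nhdsWithin x₀ {x₀}ᶜ := by
    apply mem_nhdsWithin_of_mem_nhds
    exact (hV.inter hcl.isOpen_compl).mem_nhds ⟨hxV, by simp⟩
  obtain ⟨z, hz⟩ := (hx₀.nonempty_of_mem (Filter.inter_mem hW self_mem_nhdsWithin))
  obtain ⟨⟨hzV, hzc⟩, hzne⟩ := hz
  exact hzne (by simp at hzc ⊢; exact (hzc hzV))

lemma delta_mem (h : C(K, ℝ)) (x₀ : K) (hx₀ : (nhdsWithin x₀ {x₀}ᶜ).NeBot)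
    (hn : ‖h‖ ≤ 1) {s : ℝ} (hs : |s| = 1) (hhx : h x₀ = s) :
    ‖h‖ = 1 ∧ ∀ ε > (0:ℝ),
      h ∈ closure (convexHull ℝ {g : C(K,ℝ) | ‖g‖ ≤ 1 ∧ 2 - ε ≤ ‖h - g‖}) := by
  have habs : ∀ x, |h x| ≤ 1 := fun x => by
    have := (h.norm_coe_le_norm x).trans hn
    simpa [Real.norm_eq_abs] using this
  have hs' : -1 ≤ s ∧ s ≤ 1 := abs_le.mp hs.le
  have hss : s * s = 1 := by nlinarith [sq_abs s]
  constructor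
  · refine le_antisymm hn ?_
    have := h.norm_coe_le_norm x₀
    rw [hhx, Real.norm_eq_abs, hs] at this
    exact this
  intro ε hε
  rw [Metric.mem_closure_iff]
  intro δ hδ
  obtain ⟨n, hn2⟩ := exists_nat_gt (2/δ)
  have hnpos : 0 < (n:ℝ) := lt_trans (by positivity) hn2
  set V : Set K := {x | 1 - ε < s * h x} with hVdef
  have hVopen : IsOpen V := isOpen_lt continuous_const (continuous_const.mul h.continuous)
  have hx₀V : x₀ ∈ V := by
    simp only [hVdef, Set.mem_setOf_eq, hhx, hss]
    linarith
  obtain ⟨t, htV, htcard⟩ := (V_infinite hx₀ hVopen hx₀V).exists_subset_card_eq n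
  obtain ⟨U, hU, hUdisj⟩ := t.finite_toSet.t2_separation
  have hbump : ∀ y ∈ t, ∃ η : C(K,ℝ), η y = 1 ∧ (∀ x, η x ∈ Set.Icc (0:ℝ) 1)
      ∧ ∀ x ∉ (U y ∩ V), η x = 0 := fun y hy =>
    my_bump y ((hU y).2.inter hVopen) ⟨(hU y).1, htV hy⟩
  choose! χ hχ1 hχmem hχ0 using hbump
  set g : K → C(K,ℝ) := fun y => h - χ y * (h + ContinuousMap.const K s) with hgdef
  have hgmem : ∀ y ∈ t, g y ∈ {g : C(K,ℝ) | ‖g‖ ≤ 1 ∧ 2 - ε ≤ ‖h - g‖} := by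
    intro y hy
    have hyV : y ∈ V := htV hy
    have hyV' : 1 - ε < s * h y := hyV
    constructor
    · rw [ContinuousMap.norm_le _ zero_le_one]
      intro x
      have hc := hχmem y hy x
      have hx1 := (abs_le.mp (habs x)).1
      have hx2 := (abs_le.mp (habs x)).2
      simp only [hgdef, ContinuousMap.sub_apply, ContinuousMap.mul_apply,
        ContinuousMap.add_apply, ContinuousMap.const_apply, Real.norm_eq_abs]
      rw [abs_le]
      constructor <;> nlinarith [hc.1, hc.2, hs'.1, hs'.2]
    · have hval : (h - g y) y = h y + s := by
        simp [hgdef, hχ1 y hy]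
      have h1 : |h y + s| ≤ ‖h - g y‖ := by
        have := (h - g y).norm_coe_le_norm y
        rwa [hval, Real.norm_eq_abs] at this
      have h2 : s * (h y + s) ≤ |h y + s| := by
        calc s * (h y + s) ≤ |s * (h y + s)| := le_abs_self _
        _ = |s| * |h y + s| := abs_mul _ _
        _ = |h y + s| := by rw [hs, one_mul]
      have : s * (h y + s) = s * h y + 1 := by rw [mul_add, hss]
      linarith
  set p : C(K,ℝ) := (n:ℝ)⁻¹ • ∑ y ∈ t, g y with hpdef
  refine ⟨p, ?_, ?_⟩
  · have := Finset.centerMass_mem_convexHull t (w := fun _ => (1:ℝ))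
      (fun i _ => zero_le_one) (by simp [htcard, hnpos]) hgmem
    convert this using 1
    simp [Finset.centerMass, hpdef, htcard]
  · have hsum_le : ∀ x, ∑ y ∈ t, χ y x ≤ 1 := by
      intro x
      by_cases hex : ∃ y₀ ∈ t, χ y₀ x ≠ 0
      · obtain ⟨y₀, hy₀t, hy₀ne⟩ := hex
        have hxU : ∀ y ∈ t, χ y x ≠ 0 → x ∈ U y ∩ V := by
          intro y hy hne
          by_contra hc
          exact hne (hχ0 y hy x hc)
        have hz : ∀ y ∈ t, y ≠ y₀ → χ y x = 0 := by
          intro y hy hne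
          by_contra hne2
          have h1 := hxU y hy hne2
          have h2 := hxU y₀ hy₀t hy₀ne
          exact Set.disjoint_left.mp
            (hUdisj (Finset.mem_coe.mpr hy) (Finset.mem_coe.mpr hy₀t) hne) h1.1 h2.1
        rw [Finset.sum_eq_single_of_mem y₀ hy₀t hz]
        exact (hχmem y₀ hy₀t x).2
      · push_neg at hex
        rw [Finset.sum_eq_zero (fun y hy => hex y hy)]
        exact zero_le_one
    have hsum_nonneg : ∀ x, 0 ≤ ∑ y ∈ t, χ y x :=
      fun x => Finset.sum_nonneg (fun y hy => (hχmem y hy x).1)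
    have hdist : ‖h - p‖ ≤ (n:ℝ)⁻¹ * 2 := by
      rw [ContinuousMap.norm_le _ (by positivity)]
      intro x
      have hval : (h - p) x = (n:ℝ)⁻¹ * ((∑ y ∈ t, χ y x) * (h x + s)) := by
        simp only [hpdef, hgdef, ContinuousMap.sub_apply, ContinuousMap.smul_apply,
          ContinuousMap.sum_apply, ContinuousMap.mul_apply, ContinuousMap.add_apply,
          ContinuousMap.const_apply, smul_eq_mul]
        rw [Finset.sum_sub_distrib, Finset.sum_const, htcard, ← Finset.sum_mul]
        field_simp
        ring
      rw [hval, Real.norm_eq_abs, abs_mul, abs_mul, ← mul_assoc]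
      have h1 : |(n:ℝ)⁻¹| = (n:ℝ)⁻¹ := abs_of_nonneg (by positivity)
      have h2 : |∑ y ∈ t, χ y x| ≤ 1 := abs_le.mpr ⟨by linarith [hsum_nonneg x], hsum_le x⟩
      have h3 : |h x + s| ≤ 2 := by
        have := abs_le.mp (habs x)
        rw [abs_le]; constructor <;> linarith [hs'.1, hs'.2]
      rw [h1]
      calc (n:ℝ)⁻¹ * |∑ y ∈ t, χ y x| * |h x + s| ≤ (n:ℝ)⁻¹ * 1 * 2 := by
            apply mul_le_mul _ h3 (abs_nonneg _) (by positivity)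
            exact mul_le_mul_of_nonneg_left h2 (by positivity)
      _ = (n:ℝ)⁻¹ * 2 := by ring
    rw [dist_eq_norm]
    calc ‖h - p‖ ≤ (n:ℝ)⁻¹ * 2 := hdist
    _ < δ := by
        rw [div_lt_iff₀ hδ] at hn2
        rw [inv_mul_lt_iff₀ hnpos] -- 2 < n * δ
        linarith

lemma approx_main (x₀ : K) (f : C(K,ℝ)) (hf : ‖f‖ ≤ 1) {ε : ℝ} (hε : 0 < ε) :
    ∃ fp fm : C(K,ℝ), ‖fp‖ ≤ 1 ∧ ‖fm‖ ≤ 1 ∧ fp x₀ = 1 ∧ fm x₀ = -1 ∧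
      ∃ lam : ℝ, lam ∈ Set.Icc (0:ℝ) 1 ∧ ‖f - (lam • fp + (1-lam) • fm)‖ ≤ ε := by
  have habs : ∀ x, |f x| ≤ 1 := fun x => by
    have := (f.norm_coe_le_norm x).trans hf
    simpa [Real.norm_eq_abs] using this
  set V : Set K := {x | |f x - f x₀| < ε} with hVdef
  have hVopen : IsOpen V := by
    have : Continuous fun x => |f x - f x₀| :=
      (f.continuous.sub continuous_const).abs
    exact isOpen_lt this continuous_const
  have hx₀V : x₀ ∈ V := by simp [hVdef, hε]
  obtain ⟨η, hη1, hηmem, hη0⟩ := my_bump x₀ hVopen hx₀V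
  refine ⟨f - η * f + η, f - η * f - η, ?_, ?_, ?_, ?_,
    (1 + f x₀)/2, ⟨by linarith [(abs_le.mp (habs x₀)).1], by linarith [(abs_le.mp (habs x₀)).2]⟩, ?_⟩
  · rw [ContinuousMap.norm_le _ zero_le_one]
    intro x
    have hc := hηmem x
    have hx := abs_le.mp (habs x)
    simp only [ContinuousMap.add_apply, ContinuousMap.sub_apply, ContinuousMap.mul_apply,
      Real.norm_eq_abs]
    rw [abs_le]
    constructor <;> nlinarith [hc.1, hc.2, hx.1, hx.2]
  · rw [ContinuousMap.norm_le _ zero_le_one]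
    intro x
    have hc := hηmem x
    have hx := abs_le.mp (habs x)
    simp only [ContinuousMap.sub_apply, ContinuousMap.mul_apply, Real.norm_eq_abs]
    rw [abs_le]
    constructor <;> nlinarith [hc.1, hc.2, hx.1, hx.2]
  · simp [hη1]
  · simp [hη1]
  · rw [ContinuousMap.norm_le _ hε.le]
    intro x
    have hval : (f - (((1 + f x₀)/2) • (f - η * f + η) + (1-(1 + f x₀)/2) • (f - η * f - η))) x
        = η x * (f x - f x₀) := by
      simp only [ContinuousMap.sub_apply, ContinuousMap.add_apply, ContinuousMap.smul_apply,
        ContinuousMap.mul_apply, smul_eq_mul]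
      ring
    rw [hval, Real.norm_eq_abs, abs_mul]
    by_cases hxV : x ∈ V
    · have h1 : |f x - f x₀| < ε := hxV
      have hc := hηmem x
      calc |η x| * |f x - f x₀| ≤ 1 * |f x - f x₀| := by
            apply mul_le_mul_of_nonneg_right _ (abs_nonneg _)
            rw [abs_of_nonneg hc.1]; exact hc.2
      _ ≤ ε := by rw [one_mul]; exact h1.le
    · rw [hη0 x hxV]
      simp [hε.le]

end Helpers

/-- For `K` an infinite compact Hausdorff space, `C(K)` has the convex
diametral local diameter two property: the closed unit ball is the closed
convex hull of the Δ-points. In particular, every norm-one `f` is, up to `ε`,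
a convex combination of two functions `f⁺, f⁻` of the unit ball attaining the
values `1` resp. `-1` at a limit point of `K`. -/
theorem stmt_17 {K : Type*} [TopologicalSpace K] [CompactSpace K] [T2Space K] [Infinite K] :
    Metric.closedBall (0 : C(K, ℝ)) 1 =
      closure (convexHull ℝ
        {f : C(K, ℝ) | ‖f‖ = 1 ∧ ∀ ε > (0 : ℝ),
          f ∈ closure (convexHull ℝ {g : C(K, ℝ) | ‖g‖ ≤ 1 ∧ 2 - ε ≤ ‖f - g‖})}) ∧
    ∀ f : C(K, ℝ), ‖f‖ = 1 → ∀ ε > (0 : ℝ),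
      ∃ fp fm : C(K, ℝ), ‖fp‖ ≤ 1 ∧ ‖fm‖ ≤ 1 ∧
        (∃ x₀ : K, (nhdsWithin x₀ {x₀}ᶜ).NeBot ∧ fp x₀ = 1) ∧
        (∃ x₁ : K, (nhdsWithin x₁ {x₁}ᶜ).NeBot ∧ fm x₁ = -1) ∧
        ∃ lam : ℝ, lam ∈ Set.Icc (0 : ℝ) 1 ∧
          ‖f - (lam • fp + (1 - lam) • fm)‖ ≤ ε := by
  obtain ⟨x₀, hx₀⟩ := exists_nhds_ne_neBot K
  have hx₀' : (nhdsWithin x₀ {x₀}ᶜ).NeBot := hx₀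
  set D : Set C(K,ℝ) := {f : C(K, ℝ) | ‖f‖ = 1 ∧ ∀ ε > (0 : ℝ),
    f ∈ closure (convexHull ℝ {g : C(K, ℝ) | ‖g‖ ≤ 1 ∧ 2 - ε ≤ ‖f - g‖})} with hD
  constructor
  · apply Set.Subset.antisymm
    · intro f hf
      rw [Metric.mem_closedBall, dist_zero_right] at hf
      rw [Metric.mem_closure_iff]
      intro δ hδ
      obtain ⟨fp, fm, hfp, hfm, hfp1, hfm1, lam, hlam, happ⟩ :=
        approx_main x₀ f hf (by positivity : (0:ℝ) < δ/2)
      have hfpD : fp ∈ D := delta_mem fp x₀ hx₀' hfp (abs_one) hfp1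
      have hfmD : fm ∈ D := delta_mem fm x₀ hx₀' hfm (by norm_num) hfm1
      refine ⟨lam • fp + (1-lam) • fm, ?_, ?_⟩
      · exact (convex_convexHull ℝ D) (subset_convexHull ℝ D hfpD)
          (subset_convexHull ℝ D hfmD) hlam.1 (by linarith [hlam.2]) (by ring)
      · rw [dist_eq_norm]
        calc ‖f - (lam • fp + (1-lam) • fm)‖ ≤ δ/2 := happ
        _ < δ := by linarith
    · apply closure_minimal
      apply convexHull_min
      · intro f hf
        rw [Metric.mem_closedBall, dist_zero_right]
        exact hf.1.le
      · exact convex_closedBall _ _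
      · exact Metric.isClosed_closedBall
  · intro f hf ε hε
    obtain ⟨fp, fm, hfp, hfm, hfp1, hfm1, lam, hlam, happ⟩ := approx_main x₀ f hf.le hε
    exact ⟨fp, fm, hfp, hfm, ⟨x₀, hx₀', hfp1⟩, ⟨x₀, hx₀', hfm1⟩, lam, hlam, happ⟩
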